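/- arXiv:2112.15495 — 2 statements merged into one kernel-verified Lean document; each statement's English description precedes it below -/
import Mathlib

section
/- Let K be an algebraically closed field of characteristic 0, let D₁,…,D_n be pairwise commuting endomorphisms of a finite-dimensional K-vector space E, represented simultaneously by upper triangular matrices with diagonal sequences λ^{(i)} = (λ₁^{(i)},…,λ_d^{(i)}). Suppose x = (x₁,…,x_n) ∈ K^n satisfies: for all j, j′, Σ_i x_i λ_j^{(i)} = Σ_i x_i λ_{j′}^{(i)} implies (λ_j^{(1)},…,λ_j^{(n)}) = (λ_{j′}^{(1)},…,λ_{j′}^{(n)}). Then the subalgebra K[D₁,…,D_n] of End_K(E) equals K[D(x)] + Rad(K[D₁,…,D_n]), where D(x) = Σ_i x_i D_i and Rad denotes the Jacobson radical. -/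
open Polynomial Module Matrix

private lemma diag_mul_tri {K : Type*} [Field K] {d : ℕ}
    {M N : Matrix (Fin d) (Fin d) K} (hM : M.BlockTriangular id)
    (hN : N.BlockTriangular id) (j : Fin d) : (M * N) j j = M j j * N j j := by
  rw [Matrix.mul_apply]
  apply Finset.sum_eq_single_of_mem j (Finset.mem_univ j)
  intro k _ hk
  rcases lt_or_gt_of_ne hk with h | h
  · rw [hM h, zero_mul]
  · rw [hN h, mul_zero]

private lemma tri_aeval {K : Type*} [Field K] {d : ℕ}
    {M : Matrix (Fin d) (Fin d) K} (hM : M.BlockTriangular id) (f : K[X]) :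
    (aeval M f).BlockTriangular id ∧ ∀ j, (aeval M f) j j = Polynomial.eval (M j j) f := by
  have hpow : ∀ m : ℕ, (M ^ m).BlockTriangular id ∧ ∀ j, (M ^ m) j j = (M j j) ^ m := by
    intro m
    induction m with
    | zero => exact ⟨by simpa using Matrix.blockTriangular_one, fun j => by
        simp [Matrix.one_apply]⟩
    | succ m ih =>
      refine ⟨?_, fun j => ?_⟩
      · rw [pow_succ]; exact ih.1.mul hM
      · rw [pow_succ, diag_mul_tri ih.1 hM j, ih.2 j, pow_succ]
  induction f using Polynomial.induction_on' with
  | add p q hp hq =>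
    refine ⟨by simpa [map_add] using hp.1.add hq.1, fun j => ?_⟩
    simp [map_add, hp.2 j, hq.2 j]
  | monomial m c =>
    have h1 : aeval M (monomial m c) = c • M ^ m := by
      rw [aeval_monomial, ← Algebra.smul_def]
    refine ⟨?_, fun j => ?_⟩
    · rw [h1]; intro p q h
      rw [Matrix.smul_apply, (hpow m).1 h, smul_zero]
    · rw [h1, Matrix.smul_apply, (hpow m).2 j, eval_monomial, smul_eq_mul]

private lemma strict_tri_pow_eq_zero {K : Type*} [Field K] {d : ℕ}
    {M : Matrix (Fin d) (Fin d) K} (hM : M.BlockTriangular id)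
    (hd : ∀ j, M j j = 0) : M ^ d = 0 := by
  have hc : M.charpoly = X ^ d := by
    rw [Matrix.charpoly_of_upperTriangular M hM]
    simp [hd]
  have := Matrix.aeval_self_charpoly M
  rwa [hc, map_pow, aeval_X] at this

theorem adjoin_commuting_triangular_eq_single_generator_plus_radical
    {K E : Type*} [Field K] [IsAlgClosed K] [CharZero K]
    [AddCommGroup E] [Module K E] [FiniteDimensional K E]
    (d n : ℕ) (b : Basis (Fin d) K E)
    (D : Fin n → Module.End K E)
    (hcomm : ∀ i j, Commute (D i) (D j))
    (lam : Fin d → Fin n → K)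
    (htri : ∀ (i : Fin n) (p q : Fin d), q < p → LinearMap.toMatrix b b (D i) p q = 0)
    (hdiag : ∀ (i : Fin n) (p : Fin d), LinearMap.toMatrix b b (D i) p p = lam p i)
    (x : Fin n → K)
    (hx : ∀ j j' : Fin d, (∑ i, x i * lam j i) = (∑ i, x i * lam j' i) →
      ∀ i, lam j i = lam j' i) :
    ((Algebra.adjoin K (Set.range D) : Subalgebra K (Module.End K E)) : Set (Module.End K E)) =
      {M : Module.End K E | ∃ f : Polynomial K,
        ∃ r ∈ ((⊥ : Ideal (Algebra.adjoin K (Set.range D))).jacobson),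
          M = Polynomial.aeval (∑ i, x i • D i) f + (r : Module.End K E)} := by
  classical
  letI : CommRing ↥(Algebra.adjoin K (Set.range D)) :=
    Algebra.adjoinCommRingOfComm K (fun a ha c hc => by
      obtain ⟨i, rfl⟩ := ha; obtain ⟨j, rfl⟩ := hc; exact hcomm i j)
  set Dx : Module.End K E := ∑ i, x i • D i with hDxdef
  have hDxA : Dx ∈ Algebra.adjoin K (Set.range D) :=
    Subalgebra.sum_mem _ fun i _ =>
      Subalgebra.smul_mem _ (Algebra.subset_adjoin (Set.mem_range_self i)) _
  have haevalA : ∀ f : K[X], aeval Dx f ∈ Algebra.adjoin K (Set.range D) := fun f => by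
    have h0 := Polynomial.aeval_subalgebra_coe f (Algebra.adjoin K (Set.range D))
      ⟨Dx, hDxA⟩
    rw [← h0]
    exact SetLike.coe_mem _
  set mu : Fin d → K := fun j => ∑ i, x i * lam j i with hmu
  have hTx_entry : ∀ p q, LinearMap.toMatrix b b Dx p q =
      ∑ i, x i * LinearMap.toMatrix b b (D i) p q := by
    intro p q
    rw [hDxdef, map_sum, Matrix.sum_apply]
    exact Finset.sum_congr rfl fun i _ => by rw [_root_.map_smul, Matrix.smul_apply, smul_eq_mul]
  have hTx_tri : (LinearMap.toMatrix b b Dx).BlockTriangular id := fun p q h => by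
    rw [hTx_entry]
    exact Finset.sum_eq_zero fun i _ => by rw [htri i p q h, mul_zero]
  have hTx_diag : ∀ j, LinearMap.toMatrix b b Dx j j = mu j := fun j => by
    rw [hTx_entry, hmu]
    exact Finset.sum_congr rfl fun i _ => by rw [hdiag i j]
  -- interpolation
  set s : Finset K := Finset.image mu Finset.univ with hs
  set rv : Fin n → K → K := fun i c => if h : ∃ j, mu j = c then lam h.choose i else 0 with hrv
  set f : Fin n → K[X] := fun i => Lagrange.interpolate s id (rv i) with hfdef
  have hf : ∀ i j, Polynomial.eval (mu j) (f i) = lam j i := by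
    intro i j
    have hj : mu j ∈ s := Finset.mem_image_of_mem _ (Finset.mem_univ j)
    have h1 := Lagrange.eval_interpolate_at_node (r := rv i) (Set.injOn_id _) hj
    simp only [id_eq] at h1
    have hex : ∃ j', mu j' = mu j := ⟨j, rfl⟩
    have h2 : rv i (mu j) = lam hex.choose i := dif_pos hex
    calc Polynomial.eval (mu j) (f i) = rv i (mu j) := h1
      _ = lam hex.choose i := h2
      _ = lam j i := hx _ _ (by simpa [hmu] using hex.choose_spec) i
  -- each D i lies in K[Dx] + Rad
  have hDimem : ∀ i : Fin n, ∃ g : K[X],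
      ∃ r ∈ ((⊥ : Ideal (Algebra.adjoin K (Set.range D))).jacobson),
        D i = aeval Dx g + (r : Module.End K E) := by
    intro i
    set N : Module.End K E := D i - aeval Dx (f i) with hN
    have hNA : N ∈ Algebra.adjoin K (Set.range D) :=
      sub_mem (Algebra.subset_adjoin (Set.mem_range_self i)) (haevalA _)
    have hTaev : LinearMap.toMatrix b b (aeval Dx (f i)) =
        aeval (LinearMap.toMatrix b b Dx) (f i) :=
      (Polynomial.aeval_algHom_apply
        (LinearMap.toMatrixAlgEquiv b : Module.End K E →ₐ[K] Matrix (Fin d) (Fin d) K)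
        Dx (f i)).symm
    have hTN : LinearMap.toMatrix b b N =
        LinearMap.toMatrix b b (D i) - aeval (LinearMap.toMatrix b b Dx) (f i) := by
      rw [hN, map_sub, hTaev]
    have hNtri : (LinearMap.toMatrix b b N).BlockTriangular id := by
      rw [hTN]
      exact fun p q h => by
        rw [Matrix.sub_apply, htri i p q h, (tri_aeval hTx_tri (f i)).1 h, sub_zero]
    have hNdiag : ∀ j, LinearMap.toMatrix b b N j j = 0 := fun j => by
      rw [hTN, Matrix.sub_apply, hdiag i j, (tri_aeval hTx_tri (f i)).2 j, hTx_diag j, hf i j,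
        sub_self]
    have hNd : N ^ d = 0 := by
      apply (LinearMap.toMatrixAlgEquiv b).injective
      rw [map_pow, map_zero]
      exact strict_tri_pow_eq_zero hNtri hNdiag
    have hrad : (⟨N, hNA⟩ : Algebra.adjoin K (Set.range D)) ∈
        ((⊥ : Ideal (Algebra.adjoin K (Set.range D))).jacobson) := by
      apply Ideal.radical_le_jacobson
      rw [Ideal.mem_radical_iff]
      refine ⟨d, ?_⟩
      rw [Ideal.mem_bot]
      apply Subtype.ext
      rw [SubmonoidClass.coe_pow]
      exact hNd
    exact ⟨f i, ⟨N, hNA⟩, hrad, by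
      show D i = aeval Dx (f i) + N
      rw [hN]; abel⟩
  ext M
  simp only [SetLike.mem_coe, Set.mem_setOf_eq]
  constructor
  · intro hM
    induction hM using Algebra.adjoin_induction with
    | mem a ha =>
      obtain ⟨i, rfl⟩ := ha
      exact hDimem i
    | algebraMap r =>
      exact ⟨C r, 0, Ideal.zero_mem _, by simp⟩
    | add a c ha hc iha ihc =>
      obtain ⟨f1, r1, h1, e1⟩ := iha
      obtain ⟨f2, r2, h2, e2⟩ := ihc
      refine ⟨f1 + f2, r1 + r2, Ideal.add_mem _ h1 h2, ?_⟩
      rw [e1, e2, map_add, Subalgebra.coe_add]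
      abel
    | mul a c ha hc iha ihc =>
      obtain ⟨f1, r1, h1, e1⟩ := iha
      obtain ⟨f2, r2, h2, e2⟩ := ihc
      refine ⟨f1 * f2,
        (⟨aeval Dx f1, haevalA f1⟩ : Algebra.adjoin K (Set.range D)) * r2 +
          r1 * ⟨aeval Dx f2, haevalA f2⟩ + r1 * r2, ?_, ?_⟩
      · exact Ideal.add_mem _ (Ideal.add_mem _ (Ideal.mul_mem_left _ _ h2)
          (by rw [mul_comm]; exact Ideal.mul_mem_left _ _ h1)) (Ideal.mul_mem_left _ _ h2)
      · rw [e1, e2, _root_.map_mul]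
        push_cast
        noncomm_ring
  · rintro ⟨g, r, hr, rfl⟩
    exact Subalgebra.add_mem _ (haevalA g) r.2
end

section
/- Let B be a finite-dimensional commutative algebra over a field K of characteristic 0, and K′/K any field extension. If S is a simple B-module, then K′ ⊗_K S is a semisimple multiplicity-free module over K′ ⊗_K B. -/
open TensorProduct

section Setup

variable (K K' B S : Type*) [Field K] [Field K'] [Algebra K K']
  [CommRing B] [Algebra K B]
  [AddCommGroup S] [Module K S] [Module B S] [IsScalarTower K B S]

/-- The `K`-linear endomorphism of the `B`-module `S` given by the action of `b : B`. -/
def actionLin (b : B) : S →ₗ[K] S where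
  toFun s := b • s
  map_add' x y := smul_add b x y
  map_smul' k s := smul_comm b k s

/-- The ring homomorphism `B → End_{K'}(K' ⊗[K] S)` obtained by base-changing the
`B`-action on `S`. -/
noncomputable def rho : B →+* Module.End K' (K' ⊗[K] S) where
  toFun b := LinearMap.baseChange K' (actionLin K B S b)
  map_one' := by ext x; simp [actionLin]
  map_mul' b c := by ext x; simp [actionLin, mul_smul, Module.End.mul_apply]
  map_zero' := by ext x; simp [actionLin]
  map_add' b c := by ext x; simp [actionLin, add_smul, TensorProduct.tmul_add]

/-- The `B`-module structure on `K' ⊗[K] S` obtained by base change. -/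
noncomputable def baseChangeModuleB : Module B (K' ⊗[K] S) :=
  Module.compHom _ (rho K K' B S)

/-- The `K' ⊗[K] B`-module structure on `K' ⊗[K] S`. -/
noncomputable def baseChangeModule : Module (K' ⊗[K] B) (K' ⊗[K] S) := by
  letI := baseChangeModuleB K K' B S
  haveI h2 : IsScalarTower K B (K' ⊗[K] S) := by
    constructor
    intro k b x
    show LinearMap.baseChange K' (actionLin K B S ((k • b))) x =
      k • LinearMap.baseChange K' (actionLin K B S b) x
    induction x using TensorProduct.induction_on with
    | zero =>
        rw [map_zero, map_zero]
        exact (smul_zero k).symm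
    | tmul c s =>
        simp only [LinearMap.baseChange_tmul]
        show c ⊗ₜ[K] ((k • b) • s) = k • (c ⊗ₜ[K] (actionLin K B S b s))
        rw [smul_assoc]
        show c ⊗ₜ[K] (k • (b • s)) = k • (c ⊗ₜ[K] (b • s))
        rw [TensorProduct.tmul_smul]
    | add x y hx hy => simp only [map_add, smul_add, hx, hy]
  haveI h1 : SMulCommClass K' B (K' ⊗[K] S) := by
    constructor
    intro c b x
    show c • (LinearMap.baseChange K' (actionLin K B S b) x) =
      LinearMap.baseChange K' (actionLin K B S b) (c • x)
    simp
  exact TensorProduct.Algebra.module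

attribute [local instance] baseChangeModule


/-! ### Auxiliary general lemmas -/

/-- Algebra structure of `A` over `ULift R`, with the canonical `SMul`. -/
@[reducible] noncomputable def uliftAlgebra (R : Type*) (A : Type*) [CommSemiring R] [Semiring A]
    [Algebra R A] : Algebra (ULift R) A where
  toSMul := ULift.smulLeft
  algebraMap := (algebraMap R A).comp (ULift.ringEquiv : ULift R ≃+* R).toRingHom
  commutes' r x := Algebra.commutes r.down x
  smul_def' r x := Algebra.smul_def r.down x

set_option synthInstance.maxHeartbeats 1000000 in
set_option maxHeartbeats 1600000 in
/-- Base change of a finite extension of a characteristic zero field is reduced and semisimple. -/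
theorem tensor_semisimple.{u₁, u₂, u₃} (K₁ : Type u₁) (K₁' : Type u₂) (L : Type u₃) [Field K₁] [Field K₁'] [Field L]
    [Algebra K₁ K₁'] [Algebra K₁ L] [FiniteDimensional K₁ L] [CharZero K₁] :
    IsReduced (K₁' ⊗[K₁] L) ∧ IsSemisimpleRing (K₁' ⊗[K₁] L) := by
  letI K₀ := ULift.{u₃} K₁
  letI L₀ := ULift.{u₁} L
  letI : Algebra K₀ L := uliftAlgebra K₁ L
  letI : Algebra K₀ K₁ := uliftAlgebra K₁ K₁
  letI : Algebra K₀ L₀ := uliftAlgebra K₁ L₀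
  haveI : IsScalarTower K₀ K₁ L := ⟨fun a b c => by
    show (a.down • b) • c = a.down • (b • c); rw [smul_assoc]⟩
  haveI : CharZero K₀ := charZero_of_injective_algebraMap (algebraMap K₁ K₀).injective
  haveI : Module.Finite K₀ K₁ :=
    Module.Finite.of_surjective (Algebra.linearMap K₀ K₁)
      (fun x => ⟨ULift.up x, rfl⟩)
  haveI : Module.Finite K₀ L := Module.Finite.trans K₁ L
  let e : L₀ ≃ₐ[K₀] L := AlgEquiv.ofRingEquiv (f := ULift.ringEquiv) (fun x => rfl)
  haveI : Module.Finite K₀ L₀ := Module.Finite.equiv e.symm.toLinearEquiv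
  haveI : Algebra.FormallyUnramified K₀ L₀ := Algebra.FormallyUnramified.of_isSeparable K₀ L₀
  haveI : Algebra.FormallyUnramified K₀ L := Algebra.FormallyUnramified.of_equiv e
  haveI : Algebra.FormallyUnramified K₁ L := Algebra.FormallyUnramified.of_restrictScalars (R := K₀) (A := K₁) (B := L)
  haveI : Algebra.FormallyUnramified K₁' (K₁' ⊗[K₁] L) := inferInstance
  letI k := ULift.{u₃} K₁'
  letI : Algebra k K₁' := uliftAlgebra K₁' K₁'
  letI : Algebra k (K₁' ⊗[K₁] L) := uliftAlgebra K₁' (K₁' ⊗[K₁] L)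
  haveI : IsScalarTower k K₁' (K₁' ⊗[K₁] L) := ⟨fun a b c => by
    show (a.down • b) • c = a.down • (b • c); rw [smul_assoc]⟩
  let e' : k ≃ₐ[k] K₁' := AlgEquiv.ofRingEquiv (f := ULift.ringEquiv) (fun x => rfl)
  haveI : Algebra.FormallyUnramified k K₁' := Algebra.FormallyUnramified.of_equiv e'
  haveI : Algebra.FormallyUnramified k (K₁' ⊗[K₁] L) :=
    Algebra.FormallyUnramified.comp k K₁' (K₁' ⊗[K₁] L)
  haveI : Algebra.FiniteType k K₁' :=
    Algebra.FiniteType.of_surjective (Algebra.ofId k K₁')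
      (ULift.ringEquiv : k ≃+* K₁').surjective
  haveI : Algebra.EssFiniteType k K₁' := inferInstance
  haveI : Module.Finite K₁' (K₁' ⊗[K₁] L) := inferInstance
  haveI : Algebra.EssFiniteType K₁' (K₁' ⊗[K₁] L) := inferInstance
  haveI : Algebra.EssFiniteType k (K₁' ⊗[K₁] L) := Algebra.EssFiniteType.comp k K₁' (K₁' ⊗[K₁] L)
  haveI red : IsReduced (K₁' ⊗[K₁] L) := Algebra.FormallyUnramified.isReduced_of_field k _
  haveI : IsArtinianRing (K₁' ⊗[K₁] L) := IsArtinianRing.of_finite K₁' _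
  exact ⟨red, IsArtinianRing.isSemisimpleRing_of_isReduced _⟩

/-- The key abstract lemma: if `M` is isomorphic, as an `A`-module, to a commutative ring `R'`
which is a reduced semisimple quotient of `A`, then `M` is semisimple and multiplicity-free. -/
theorem main_aux {A R' M : Type*} [CommRing A] [CommRing R'] [AddCommGroup M] [Module A M]
    [Module A R'] (π : A →+* R') (hπ : Function.Surjective π)
    (hsmul : ∀ (a : A) (r : R'), a • r = π a * r)
    [IsReduced R'] [hss : IsSemisimpleRing R'] (E : M ≃ₗ[A] R') :
    IsSemisimpleModule A M ∧
      ∀ p q : Submodule A M, IsSimpleModule A p → IsSimpleModule A q → p ≠ q →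
        IsEmpty (p ≃ₗ[A] q) := by
  classical
  let σ : Submodule A R' ≃o Submodule R' R' :=
    { toFun := fun p =>
        { carrier := p
          add_mem' := fun h1 h2 => p.add_mem h1 h2
          zero_mem' := p.zero_mem
          smul_mem' := by
            intro r x hx
            obtain ⟨a, rfl⟩ := hπ r
            rw [smul_eq_mul, ← hsmul]
            exact p.smul_mem a hx }
      invFun := fun q =>
        { carrier := q
          add_mem' := fun h1 h2 => q.add_mem h1 h2
          zero_mem' := q.zero_mem
          smul_mem' := by
            intro a x hx
            rw [hsmul]
            exact q.smul_mem (π a) hx }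
      left_inv := fun p => by ext x; rfl
      right_inv := fun q => by ext x; rfl
      map_rel_iff' := Iff.rfl }
  have hcl : IsSemisimpleModule A M := by
    have : ComplementedLattice (Submodule R' R') := hss.toComplementedLattice
    exact (isSemisimpleModule_iff A M).mpr ((Submodule.orderIsoMapComap E).trans σ).symm.complementedLattice
  refine ⟨hcl, fun p q hp hq hpq => ⟨fun φ => hpq ?_⟩⟩
  set p' := p.map (E : M →ₗ[A] R') with hp'def
  set q' := q.map (E : M →ₗ[A] R') with hq'def
  have ep : p ≃ₗ[A] p' := E.submoduleMap p
  have eq' : q ≃ₗ[A] q' := E.submoduleMap q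
  haveI hp' : IsSimpleModule A p' := IsSimpleModule.congr ep.symm
  haveI hq' : IsSimpleModule A q' := IsSimpleModule.congr eq'.symm
  have hatp : IsAtom p' := isSimpleModule_iff_isAtom.mp hp'
  have hatq : IsAtom q' := isSimpleModule_iff_isAtom.mp hq'
  let φ' : p' ≃ₗ[A] q' := (ep.symm.trans φ).trans eq'
  obtain ⟨x, hxp, hx0⟩ := Submodule.exists_mem_ne_zero_of_ne_bot hatp.1
  have hxx : x * x ≠ 0 := fun h => hx0 (IsNilpotent.eq_zero ⟨2, by rwa [pow_two]⟩)
  obtain ⟨a, ha⟩ := hπ x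
  set y : R' := (φ' ⟨x, hxp⟩ : R') with hy
  obtain ⟨b, hb⟩ := hπ y
  have key1 : a • y = x * y := by rw [hsmul, ha]
  have key2 : a • x = x * x := by rw [hsmul, ha]
  have hzq : x * y ∈ q' := by
    rw [← key1]
    exact q'.smul_mem a (φ' ⟨x, hxp⟩).2
  have hzp : x * y ∈ p' := by
    have : x * y = b • x := by rw [hsmul, hb, mul_comm]
    rw [this]
    exact p'.smul_mem b hxp
  have hz0 : x * y ≠ 0 := by
    intro h
    have h1 : (φ' (a • ⟨x, hxp⟩) : R') = a • y := by rw [map_smul]; rfl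
    have h2 : φ' (a • ⟨x, hxp⟩) = 0 := by
      apply Subtype.ext
      rw [h1, key1, h]
      rfl
    have h3 : (a • (⟨x, hxp⟩ : p') : p') = 0 := φ'.injective (by rw [h2, map_zero])
    have h4 : a • x = 0 := congrArg Subtype.val h3
    rw [key2] at h4
    exact hxx h4
  have hne : p' ⊓ q' ≠ ⊥ := by
    intro h
    have : x * y ∈ (⊥ : Submodule A R') := h ▸ Submodule.mem_inf.mpr ⟨hzp, hzq⟩
    exact hz0 (Submodule.mem_bot A |>.mp this)
  have h1 : p' ⊓ q' = p' := (hatp.le_iff.mp inf_le_left).resolve_left hne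
  have h2 : p' ⊓ q' = q' := (hatq.le_iff.mp inf_le_right).resolve_left hne
  have hpq' : p' = q' := h1 ▸ h2
  exact Submodule.map_injective_of_injective E.injective hpq'

/-! ### Computation lemmas for the base-changed module structure -/

lemma smul_tmul_tmul (c c' : K') (b : B) (s : S) :
    (c ⊗ₜ[K] b : K' ⊗[K] B) • (c' ⊗ₜ[K] s : K' ⊗[K] S) = (c * c') ⊗ₜ[K] (b • s) := by
  with_unfolding_all rfl

section
variable (T : Type*) [AddCommGroup T] [Module K T] [Module B T] [IsScalarTower K B T]

lemma baseChange_map_smul (f : S →ₗ[B] T) (a : K' ⊗[K] B) (x : K' ⊗[K] S) :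
    LinearMap.baseChange K' (f.restrictScalars K) (a • x) =
      a • (LinearMap.baseChange K' (f.restrictScalars K) x) := by
  induction a using TensorProduct.induction_on with
  | zero => rw [zero_smul, zero_smul, map_zero]
  | add a₁ a₂ h₁ h₂ => rw [add_smul, add_smul, map_add, h₁, h₂]
  | tmul c b =>
      induction x using TensorProduct.induction_on with
      | zero => rw [smul_zero, map_zero, smul_zero]
      | add x₁ x₂ h₁ h₂ => rw [smul_add, map_add, map_add, smul_add, h₁, h₂]
      | tmul c' s =>
          rw [smul_tmul_tmul, LinearMap.baseChange_tmul, LinearMap.baseChange_tmul,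
            smul_tmul_tmul]
          simp only [LinearMap.coe_restrictScalars, map_smul]
end

theorem base_change_of_simple_is_semisimple_multiplicity_free
    [FiniteDimensional K B] [CharZero K]
    (hS : IsSimpleModule B S) :
    IsSemisimpleModule (K' ⊗[K] B) (K' ⊗[K] S) ∧
      ∀ p q : Submodule (K' ⊗[K] B) (K' ⊗[K] S),
        IsSimpleModule (K' ⊗[K] B) p → IsSimpleModule (K' ⊗[K] B) q → p ≠ q →
        IsEmpty (p ≃ₗ[K' ⊗[K] B] q) := by
  classical
  haveI := hS
  haveI := IsSimpleModule.nontrivial B S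
  obtain ⟨s₀, hs₀⟩ := exists_ne (0 : S)
  have hfs : Function.Surjective (LinearMap.toSpanSingleton B S s₀) :=
    IsSimpleModule.toSpanSingleton_surjective B hs₀
  set m : Ideal B := LinearMap.ker (LinearMap.toSpanSingleton B S s₀) with hmdef
  haveI hm : m.IsMaximal := IsSimpleModule.ker_toSpanSingleton_isMaximal B hs₀
  letI : Field (B ⧸ m) := Ideal.Quotient.field m
  obtain ⟨hred, hss⟩ := tensor_semisimple K K' (B ⧸ m)
  haveI := hred
  haveI := hss
  let g : (B ⧸ m) ≃ₗ[B] S :=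
    (LinearMap.toSpanSingleton B S s₀).quotKerEquivOfSurjective hfs
  let π : (K' ⊗[K] B) →+* (K' ⊗[K] (B ⧸ m)) :=
    (Algebra.TensorProduct.map (AlgHom.id K' K') (Ideal.Quotient.mkₐ K m)).toRingHom
  have hπ : Function.Surjective π := by
    intro z
    induction z using TensorProduct.induction_on with
    | zero => exact ⟨0, map_zero π⟩
    | tmul c y =>
        obtain ⟨y₀, rfl⟩ := Ideal.Quotient.mk_surjective y
        exact ⟨c ⊗ₜ y₀, by simp [π]⟩
    | add z₁ z₂ h₁ h₂ =>
        obtain ⟨a₁, rfl⟩ := h₁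
        obtain ⟨a₂, rfl⟩ := h₂
        exact ⟨a₁ + a₂, map_add π a₁ a₂⟩
  have hsmul : ∀ (a : K' ⊗[K] B) (r : K' ⊗[K] (B ⧸ m)), a • r = π a * r := by
    intro a r
    induction a using TensorProduct.induction_on with
    | zero => rw [zero_smul, map_zero, zero_mul]
    | add a₁ a₂ h₁ h₂ => rw [add_smul, map_add, add_mul, h₁, h₂]
    | tmul c b =>
        induction r using TensorProduct.induction_on with
        | zero => rw [smul_zero, mul_zero]
        | add r₁ r₂ h₁ h₂ => rw [smul_add, mul_add, h₁, h₂]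
        | tmul c' x =>
            obtain ⟨y, rfl⟩ := Ideal.Quotient.mk_surjective x
            rw [smul_tmul_tmul]
            have hb : b • (Ideal.Quotient.mk m y) = (Ideal.Quotient.mk m b) * (Ideal.Quotient.mk m y) := by
              rw [← map_mul, ← smul_eq_mul]
              rfl
            simp only [π, AlgHom.toRingHom_eq_coe, RingHom.coe_coe, Algebra.TensorProduct.map_tmul,
              AlgHom.coe_id, id_eq, Ideal.Quotient.mkₐ_eq_mk, Algebra.TensorProduct.tmul_mul_tmul,
              hb]
  let F : (K' ⊗[K] (B ⧸ m)) →ₗ[K' ⊗[K] B] (K' ⊗[K] S) :=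
    { toFun := LinearMap.baseChange K' (g.toLinearMap.restrictScalars K)
      map_add' := fun x y => map_add _ x y
      map_smul' := fun a x => baseChange_map_smul K K' B (B ⧸ m) S g.toLinearMap a x }
  have hFbij : Function.Bijective F := by
    have h : ⇑F = ⇑(LinearEquiv.baseChange K K' _ _ (LinearEquiv.restrictScalars K g)) := rfl
    rw [h]
    exact (LinearEquiv.baseChange K K' _ _ (LinearEquiv.restrictScalars K g)).bijective
  let E : (K' ⊗[K] (B ⧸ m)) ≃ₗ[K' ⊗[K] B] (K' ⊗[K] S) := LinearEquiv.ofBijective F hFbij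
  exact main_aux π hπ hsmul E.symm

end Setup
end
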